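/- Fix ε, ℓ, γ, μ* > 0 such that −2⁵ξ² + (μ*ε + 6ℓ)ξ − (γ+1)ℓ ≤ 0 for all ξ ∈ ℝ. With τ(t) = ε−ℓt, a(t) = 2⁵e^{(γ+1)τ}, b(t) = 8e^{τ}, u̲(s,t) = a(s^{3/2}+3τ³s)/(s^{1/2}+τ³)³ and w̲(s,t) = bs/(s^{1/2}+τ³), one has u̲_t − 16s^{3/2}u̲_{ss} − 4u̲_s(w̲ − μ*s/4) ≤ 0 for all s ∈ (0,1), t ∈ (0,ε/ℓ). -/

import Mathlib

set_option linter.all false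
open Real

lemma hg_deriv' (c x : ℝ) (hc : 0 < c) (hx : 0 < x) :
    HasDerivAt (fun s : ℝ => (s ^ ((3:ℝ)/2) + 3*c*s) / (s ^ ((1:ℝ)/2) + c)^3)
      (3*c^2 / (x ^ ((1:ℝ)/2) + c)^4) x := by
  have hxne : x ≠ 0 := hx.ne'
  have hy : 0 < x ^ ((1:ℝ)/2) := Real.rpow_pos_of_pos hx _
  have hD : (0:ℝ) < x ^ ((1:ℝ)/2) + c := by positivity
  have h1 : HasDerivAt (fun s : ℝ => s ^ ((3:ℝ)/2)) ((3:ℝ)/2 * x ^ ((3:ℝ)/2 - 1)) x :=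
    Real.hasDerivAt_rpow_const (Or.inl hxne)
  have h2 : HasDerivAt (fun s : ℝ => s ^ ((1:ℝ)/2)) ((1:ℝ)/2 * x ^ ((1:ℝ)/2 - 1)) x :=
    Real.hasDerivAt_rpow_const (Or.inl hxne)
  have hN : HasDerivAt (fun s : ℝ => s ^ ((3:ℝ)/2) + 3*c*s)
      ((3:ℝ)/2 * x ^ ((3:ℝ)/2-1) + 3*c) x := by
    have := h1.add ((hasDerivAt_id x).const_mul (3*c)); simp only [mul_one] at this; exact this
  have hDd := (h2.add_const c).pow 3
  have hmain := hN.div hDd (by simp only [Pi.pow_apply]; positivity)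
  refine hmain.congr_deriv ?_
  symm
  simp only [Pi.pow_apply, Pi.mul_apply]
  have e1 : x ^ ((3:ℝ)/2 - 1) = x ^ ((1:ℝ)/2) := by norm_num
  have e2 : x ^ ((1:ℝ)/2 - 1) = (x ^ ((1:ℝ)/2))⁻¹ := by
    rw [show (1:ℝ)/2 - 1 = -(1/2) by norm_num, Real.rpow_neg hx.le]
  have e3 : x ^ ((3:ℝ)/2) = x * x ^ ((1:ℝ)/2) := by
    rw [show (3:ℝ)/2 = 1 + 1/2 by norm_num, Real.rpow_add hx, Real.rpow_one]
  have hyy : x ^ ((1:ℝ)/2) * x ^ ((1:ℝ)/2) = x := by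
    rw [← Real.rpow_add hx]; norm_num
  rw [e1, e2, e3]
  set y := x ^ ((1:ℝ)/2) with hydef
  rw [← hyy]
  field_simp
  ring

lemma hu_deriv (A c x : ℝ) (hc : 0 < c) (hx : 0 < x) :
    HasDerivAt (fun s : ℝ => A * (s ^ ((3:ℝ)/2) + 3*c*s) / (s ^ ((1:ℝ)/2) + c)^3)
      (A * (3*c^2 / (x ^ ((1:ℝ)/2) + c)^4)) x := by
  simpa only [← mul_div_assoc] using (hg_deriv' c x hc hx).const_mul A

lemma hK_deriv (K c x : ℝ) (hc : 0 < c) (hx : 0 < x) :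
    HasDerivAt (fun s : ℝ => K * (3*c^2 / (s ^ ((1:ℝ)/2) + c)^4))
      (K * (-6*c^2 / (x ^ ((1:ℝ)/2) * (x ^ ((1:ℝ)/2) + c)^5))) x := by
  have hxne : x ≠ 0 := hx.ne'
  have hy : 0 < x ^ ((1:ℝ)/2) := Real.rpow_pos_of_pos hx _
  have hD : (0:ℝ) < x ^ ((1:ℝ)/2) + c := by positivity
  have h2 : HasDerivAt (fun s : ℝ => s ^ ((1:ℝ)/2)) ((1:ℝ)/2 * x ^ ((1:ℝ)/2 - 1)) x :=
    Real.hasDerivAt_rpow_const (Or.inl hxne)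
  have hDd := ((h2.add_const c).pow 4)
  have hmain := ((hasDerivAt_const x (3*c^2)).div hDd (by simp only [Pi.pow_apply]; positivity)).const_mul K
  refine hmain.congr_deriv ?_
  symm
  simp only [Pi.pow_apply, Pi.mul_apply]
  have e2 : x ^ ((1:ℝ)/2 - 1) = (x ^ ((1:ℝ)/2))⁻¹ := by
    rw [show (1:ℝ)/2 - 1 = -(1/2) by norm_num, Real.rpow_neg hx.le]
  rw [e2]
  field_simp
  ring

lemma ht_deriv (ε ℓ γ : ℝ) (s : ℝ) (hs : 0 < s) (t : ℝ) (hT : 0 < ε - ℓ*t) :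
    HasDerivAt (fun t' : ℝ => 2^5 * Real.exp ((γ+1) * (ε - ℓ*t'))
        * (s ^ ((3:ℝ)/2) + 3*(ε - ℓ*t')^3*s) / (s ^ ((1:ℝ)/2) + (ε - ℓ*t')^3)^3)
      (-(ℓ*(γ+1)) * (2^5 * Real.exp ((γ+1)*(ε-ℓ*t))
          * (s ^ ((3:ℝ)/2) + 3*(ε-ℓ*t)^3*s) / (s ^ ((1:ℝ)/2) + (ε-ℓ*t)^3)^3)
        + 18*ℓ*(ε-ℓ*t)^5 * (2^5 * Real.exp ((γ+1)*(ε-ℓ*t))) * s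
            / (s ^ ((1:ℝ)/2) + (ε-ℓ*t)^3)^4) t := by
  have hσ : 0 < s ^ ((1:ℝ)/2) := Real.rpow_pos_of_pos hs _
  have hD : (0:ℝ) < s ^ ((1:ℝ)/2) + (ε-ℓ*t)^3 := by positivity
  have hTd : HasDerivAt (fun t' : ℝ => ε - ℓ*t') (-ℓ) t := by
    simpa using ((hasDerivAt_id t).const_mul ℓ).const_sub ε
  have hT3 := hTd.pow 3
  have hA : HasDerivAt (fun t' : ℝ => 2^5 * Real.exp ((γ+1)*(ε-ℓ*t')))
      ((2:ℝ)^5 * (Real.exp ((γ+1)*(ε-ℓ*t)) * ((γ+1)*(-ℓ)))) t :=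
    ((hTd.const_mul (γ+1)).exp).const_mul (2^5)
  have hN : HasDerivAt (fun t' : ℝ => s ^ ((3:ℝ)/2) + 3*(ε-ℓ*t')^3*s)
      ((3 * ((3:ℕ)*(ε-ℓ*t)^(3-1)*(-ℓ))) * s) t := ((hT3.const_mul 3).mul_const s).const_add _
  have hDen := (hT3.const_add (s ^ ((1:ℝ)/2))).pow 3
  have hmain := (hA.mul hN).div hDen (by simp only [Pi.pow_apply]; positivity)
  refine hmain.congr_deriv ?_
  symm
  simp only [Pi.pow_apply, Pi.mul_apply]
  have e3 : s ^ ((3:ℝ)/2) = s * s ^ ((1:ℝ)/2) := by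
    rw [show (3:ℝ)/2 = 1 + 1/2 by norm_num, Real.rpow_add hs, Real.rpow_one]
  rw [e3]
  field_simp
  ring


lemma final_eq (ℓ γ μs s σ T A E : ℝ) (hσ : σ ≠ 0) (hD : σ + T^3 ≠ 0) :
    -(ℓ * (γ + 1)) * (A * (s * σ + 3 * T ^ 3 * s) / (σ + T ^ 3) ^ 3) +
        18 * ℓ * T ^ 5 * A * s / (σ + T ^ 3) ^ 4 -
      16 * (s * σ) * (A * (-6 * (T ^ 3) ^ 2 / (σ * (σ + T ^ 3) ^ 5))) -
      4 * (A * (3 * (T ^ 3) ^ 2 / (σ + T ^ 3) ^ 4)) * (8 * E * s / (σ + T ^ 3) - μs * s / 4) =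
    A * s * (-ℓ * (γ + 1) * (σ + 3 * T ^ 3) * (σ + T ^ 3) ^ 2 + 18 * ℓ * T ^ 5 * (σ + T ^ 3) +
        96 * T ^ 6 * (1 - E) + 3 * μs * T ^ 6 * (σ + T ^ 3)) / (σ + T ^ 3) ^ 5 := by
  field_simp
  ring

set_option maxHeartbeats 1000000 in
theorem stmt_14 (ε ℓ γ μs : ℝ) (hε : 0 < ε) (hℓ : 0 < ℓ) (hγ : 0 < γ) (hμ : 0 < μs)
    (hquad : ∀ ξ : ℝ, -2^5*ξ^2 + (μs*ε + 6*ℓ)*ξ - (γ+1)*ℓ ≤ 0) :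
    let τ : ℝ → ℝ := fun t => ε - ℓ*t
    let a : ℝ → ℝ := fun t => 2^5 * Real.exp ((γ+1) * τ t)
    let b : ℝ → ℝ := fun t => 8 * Real.exp (τ t)
    let u : ℝ → ℝ → ℝ := fun s t =>
      a t * (s ^ ((3:ℝ)/2) + 3*(τ t)^3*s) / (s ^ ((1:ℝ)/2) + (τ t)^3)^3
    let w : ℝ → ℝ → ℝ := fun s t => b t * s / (s ^ ((1:ℝ)/2) + (τ t)^3)
    ∀ s ∈ Set.Ioo (0:ℝ) 1, ∀ t ∈ Set.Ioo 0 (ε/ℓ),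
      deriv (fun t' => u s t') t
        - 16 * s ^ ((3:ℝ)/2) * deriv (fun s' => deriv (fun s'' => u s'' t) s') s
        - 4 * deriv (fun s' => u s' t) s * (w s t - μs*s/4) ≤ 0 := by
  intro τ a b u w s hs t ht
  obtain ⟨hs0, hs1⟩ := hs
  obtain ⟨ht0, ht1⟩ := ht
  have hT0 : 0 < ε - ℓ*t := by
    have := (lt_div_iff₀ hℓ).mp ht1; nlinarith
  have hTε : ε - ℓ*t ≤ ε := by nlinarith
  have hσ : 0 < s ^ ((1:ℝ)/2) := Real.rpow_pos_of_pos hs0 _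
  have hc : 0 < (ε - ℓ*t)^3 := by positivity
  have hD : (0:ℝ) < s ^ ((1:ℝ)/2) + (ε-ℓ*t)^3 := by positivity
  simp only [u, a, b, w, τ]
  -- time derivative
  rw [(ht_deriv ε ℓ γ s hs0 t hT0).deriv]
  -- second space derivative
  have hev : (fun s' => deriv
        (fun s'' => 2^5 * Real.exp ((γ+1) * (ε - ℓ*t))
          * (s'' ^ ((3:ℝ)/2) + 3*(ε - ℓ*t)^3*s'') / (s'' ^ ((1:ℝ)/2) + (ε - ℓ*t)^3)^3) s')
      =ᶠ[nhds s] (fun s' => (2^5 * Real.exp ((γ+1) * (ε - ℓ*t)))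
          * (3*((ε - ℓ*t)^3)^2 / (s' ^ ((1:ℝ)/2) + (ε - ℓ*t)^3)^4)) := by
    filter_upwards [eventually_gt_nhds hs0] with s' hs'
    exact (hu_deriv (2^5 * Real.exp ((γ+1) * (ε - ℓ*t))) ((ε - ℓ*t)^3) s' hc hs').deriv
  rw [hev.deriv_eq,
    (hK_deriv (2^5 * Real.exp ((γ+1) * (ε - ℓ*t))) ((ε - ℓ*t)^3) s hc hs0).deriv,
    (hu_deriv (2^5 * Real.exp ((γ+1) * (ε - ℓ*t))) ((ε - ℓ*t)^3) s hc hs0).deriv]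
  -- now pure inequality
  set T := ε - ℓ*t with hTdef
  set σ := s ^ ((1:ℝ)/2) with hσdef
  set A := (2:ℝ)^5 * Real.exp ((γ+1)*T) with hAdef
  set E := Real.exp T with hEdef
  have hA0 : 0 < A := by positivity
  have hE1 : 1 + T ≤ E := by
    have := Real.add_one_le_exp T; linarith
  have e3 : s ^ ((3:ℝ)/2) = s * σ := by
    rw [hσdef, show (3:ℝ)/2 = 1 + 1/2 by norm_num, Real.rpow_add hs0, Real.rpow_one]
  rw [e3]
  have hq2 : -32*T^4 + (μs*ε+6*ℓ)*T^2*(σ+T^3) - (γ+1)*ℓ*(σ+T^3)^2 ≤ 0 := by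
    have h := hquad (T^2/(σ+T^3))
    have h2 := mul_nonpos_of_nonpos_of_nonneg h (by positivity : (0:ℝ) ≤ (σ+T^3)^2)
    calc -32*T^4 + (μs*ε+6*ℓ)*T^2*(σ+T^3) - (γ+1)*ℓ*(σ+T^3)^2
        = (-2^5*(T^2/(σ+T^3))^2 + (μs*ε + 6*ℓ)*(T^2/(σ+T^3)) - (γ+1)*ℓ)*(σ+T^3)^2 := by
          field_simp; ring
      _ ≤ 0 := h2
  have h3 : (-32*T^4 + (μs*ε+6*ℓ)*T^2*(σ+T^3) - (γ+1)*ℓ*(σ+T^3)^2) * (3*T^3) ≤ 0 :=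
    mul_nonpos_of_nonpos_of_nonneg hq2 (by positivity)
  have hμ6 : μs*T^6*(σ+T^3) ≤ μs*ε*T^5*(σ+T^3) := by
    nlinarith [mul_pos (mul_pos hμ (pow_pos hT0 5)) hD]
  have hE6 : 96*T^6*(1-E) ≤ -(96*T^7) := by nlinarith [pow_pos hT0 6]
  have hσ1 : (0:ℝ) ≤ ℓ*(γ+1)*σ*(σ+T^3)^2 := by positivity
  have hQ : -ℓ*(γ+1)*(σ+3*T^3)*(σ+T^3)^2 + 18*ℓ*T^5*(σ+T^3) + 96*T^6*(1-E)
      + 3*μs*T^6*(σ+T^3) ≤ 0 := by linarith [h3, hμ6, hE6, hσ1]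
  have hnum : A*s*(-ℓ*(γ+1)*(σ+3*T^3)*(σ+T^3)^2 + 18*ℓ*T^5*(σ+T^3) + 96*T^6*(1-E)
      + 3*μs*T^6*(σ+T^3)) ≤ 0 := by
    have := mul_pos hA0 hs0
    exact mul_nonpos_of_nonneg_of_nonpos (le_of_lt this) hQ
  have hfin : A*s*(-ℓ*(γ+1)*(σ+3*T^3)*(σ+T^3)^2 + 18*ℓ*T^5*(σ+T^3) + 96*T^6*(1-E)
      + 3*μs*T^6*(σ+T^3))/(σ+T^3)^5 ≤ 0 :=
    div_nonpos_of_nonpos_of_nonneg hnum (by positivity)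
  exact le_trans (le_of_eq (final_eq ℓ γ μs s σ T A E hσ.ne' hD.ne')) hfin
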